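/- For all reals ρ > 0 and ν ≥ 1 and every natural number k, there exists a natural number D such that every finite simple graph admitting a (ρ,ν)-noisy, (ρ,k)-shallow embedding into the hyperbolic plane ℍ has maximum degree at most D; that is, every vertex has at most D neighbors. -/
import Mathlib

open scoped UpperHalfPlane

open Metric UpperHalfPlane in
/-- For all `ρ > 0`, `ν ≥ 1` and `k : ℕ`, there is a bound `D` such that
every finite simple graph admitting a `(ρ,ν)`-noisy, `(ρ,k)`-shallow embedding into the
hyperbolic plane has maximum degree at most `D`. -/
theorem stmt_18 (ρ ν : ℝ) (hρ : 0 < ρ) (hν : 1 ≤ ν) (k : ℕ) :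
    ∃ D : ℕ, ∀ (V : Type) [Fintype V] (G : SimpleGraph V) (η : V → ℍ),
      (∀ v w : V, v ≠ w →
        (dist (η v) (η w) < 2 * ρ → G.Adj v w) ∧
        (dist (η v) (η w) > 2 * ρ * ν → ¬ G.Adj v w)) →
      (∀ x : ℍ, Nat.card {v : V // dist (η v) x ≤ ρ} ≤ k) →
      ∀ v : V, Nat.card {w : V // G.Adj v w} ≤ D := by
  classical
  -- cover the closed ball of radius 2ρν around I by finitely many ρ-balls
  obtain ⟨t, -, htfin, htcov⟩ :=
    (isCompact_closedBall (UpperHalfPlane.I) (2 * ρ * ν)).finite_cover_balls hρ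
  refine ⟨k * htfin.toFinset.card, ?_⟩
  intro V _ G η hnoisy hshallow v
  -- the isometry sending η v to I
  set z := η v with hz
  have himpos : (0 : ℝ) < z.im := z.im_pos
  let c : { x : ℝ // 0 < x } := ⟨(z.im)⁻¹, by positivity⟩
  let e1 : ℍ ≃ᵢ ℍ := ⟨AddAction.toPerm (-z.re), UpperHalfPlane.isometry_real_vadd (-z.re)⟩
  let e2 : ℍ ≃ᵢ ℍ := ⟨MulAction.toPerm c, UpperHalfPlane.isometry_pos_mul c⟩
  let e : ℍ ≃ᵢ ℍ := e1.trans e2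
  have he : e z = UpperHalfPlane.I := by
    have hdef : e z = c • ((-z.re) +ᵥ z) := rfl
    rw [hdef]
    ext
    show ((c • ((-z.re) +ᵥ z) : ℍ) : ℂ) = Complex.I
    rw [UpperHalfPlane.coe_pos_real_smul, UpperHalfPlane.coe_vadd]
    apply Complex.ext <;>
      simp [Complex.smul_re, Complex.smul_im, c, UpperHalfPlane.coe_re, UpperHalfPlane.coe_im,
        inv_mul_cancel₀ himpos.ne']
  -- every neighbor lands in the closed ball
  have hnb : ∀ w : V, G.Adj v w → e (η w) ∈ closedBall UpperHalfPlane.I (2 * ρ * ν) := by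
    intro w hadj
    have hne : v ≠ w := hadj.ne
    have := (hnoisy v w hne).2
    have hle : dist (η v) (η w) ≤ 2 * ρ * ν := le_of_not_gt fun h => this h hadj
    rw [mem_closedBall, ← he]
    calc dist (e (η w)) (e z) = dist (η w) z := e.isometry.dist_eq _ _
      _ ≤ 2 * ρ * ν := by rw [dist_comm]; exact hle
  -- choose a center of a covering ball for each vertex
  let f : V → ℍ := fun w =>
    if h : ∃ x ∈ htfin.toFinset, e (η w) ∈ ball x ρ then h.choose else UpperHalfPlane.I
  have hf : ∀ w : V, G.Adj v w → f w ∈ htfin.toFinset ∧ e (η w) ∈ ball (f w) ρ := by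
    intro w hadj
    have hmem := htcov (hnb w hadj)
    simp only [Set.mem_iUnion] at hmem
    obtain ⟨x, hx, hxball⟩ := hmem
    have h : ∃ x ∈ htfin.toFinset, e (η w) ∈ ball x ρ :=
      ⟨x, htfin.mem_toFinset.2 hx, hxball⟩
    simp only [f, dif_pos h]
    exact h.choose_spec
  -- counting
  have hcard : Nat.card {w : V // G.Adj v w}
      = (Finset.univ.filter fun w => G.Adj v w).card := by
    rw [Nat.card_eq_fintype_card, Fintype.card_subtype]
  rw [hcard]
  refine Finset.card_le_mul_card_image_of_maps_to (f := f) (t := htfin.toFinset) ?_ k ?_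
  · intro w hw
    exact (hf w (Finset.mem_filter.1 hw).2).1
  · intro x hx
    have hsub : (Finset.univ.filter fun w => G.Adj v w).filter (fun w => f w = x)
        ⊆ Finset.univ.filter fun w => dist (η w) (e.symm x) ≤ ρ := by
      intro w hw
      simp only [Finset.mem_filter] at hw ⊢
      obtain ⟨⟨-, hadj⟩, hfx⟩ := hw
      have hball := (hf w hadj).2
      rw [hfx] at hball
      refine ⟨Finset.mem_univ _, ?_⟩
      have : dist (η w) (e.symm x) = dist (e (η w)) x := by
        rw [← e.isometry.dist_eq, e.apply_symm_apply]
      rw [this]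
      exact le_of_lt (mem_ball.1 hball)
    calc ((Finset.univ.filter fun w => G.Adj v w).filter (fun w => f w = x)).card
        ≤ (Finset.univ.filter fun w => dist (η w) (e.symm x) ≤ ρ).card :=
          Finset.card_le_card hsub
      _ = Nat.card {w : V // dist (η w) (e.symm x) ≤ ρ} := by
          rw [Nat.card_eq_fintype_card, Fintype.card_subtype]
      _ ≤ k := hshallow _
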